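/- arXiv:2510.18183 — 5 statements merged into one kernel-verified Lean document; each statement's English description precedes it below -/
import Mathlib

section
/- Let F be a monotone operator on a closed convex set Z, ψ a differentiable strongly convex function, α > 0, and ρ ∈ int dom ψ ∩ Z. Suppose z* ∈ Z solves the variational inequality VI(Z, F) (i.e., ⟨F(z*), z − z*⟩ ≥ 0 for all z ∈ Z), and suppose ẑ ∈ int dom ψ ∩ Z solves the regularized variational inequality VI(Z, G_ρ) where G_ρ(z) = F(z) + α(∇ψ(z) − ∇ψ(ρ)). Then B_ψ(z*; ρ) ≥ B_ψ(z*; ẑ) + B_ψ(ẑ; ρ). -/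
open scoped RealInnerProductSpace

/-- Bregman divergence of `ψ` with gradient map `g`. -/
noncomputable def breg {E : Type*} [NormedAddCommGroup E] [InnerProductSpace ℝ E]
    (ψ : E → ℝ) (g : E → E) (a b : E) : ℝ :=
  ψ a - ψ b - ⟪g b, a - b⟫

/-- Distance non-increase: for a Nash equilibrium `zs` (solution of `VI(Z,F)`) and the
solution `zh` of the regularized VI with reference `ρ`,
`B_ψ(z*; ρ) ≥ B_ψ(z*; ẑ) + B_ψ(ẑ; ρ)`. -/
theorem bregman_distance_non_increase {E : Type*} [NormedAddCommGroup E]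
    [InnerProductSpace ℝ E]
    (Z : Set E) (hZc : IsClosed Z) (hZ : Convex ℝ Z) (F : E → E)
    (hF : ∀ u ∈ Z, ∀ v ∈ Z, ⟪F u - F v, u - v⟫ ≥ 0)
    (ψ : E → ℝ) (g : E → E) (D : Set E) (μ : ℝ) (hμ : 0 < μ)
    (hsc : ∀ x y : E, ψ y ≥ ψ x + ⟪g x, y - x⟫ + μ / 2 * ‖y - x‖ ^ 2)
    (α : ℝ) (hα : 0 < α) (ρ : E) (hρ : ρ ∈ interior D ∩ Z)
    (zs : E) (hzs : zs ∈ Z) (hVI : ∀ z ∈ Z, ⟪F zs, z - zs⟫ ≥ 0)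
    (zh : E) (hzh : zh ∈ interior D ∩ Z)
    (hVIr : ∀ z ∈ Z, ⟪F zh + α • (g zh - g ρ), z - zh⟫ ≥ 0) :
    breg ψ g zs ρ ≥ breg ψ g zs zh + breg ψ g zh ρ := by
  have h1 := hVIr zs hzs
  have h2 := hVI zh hzh.2
  have h3 := hF zh hzh.2 zs hzs
  have key : ⟪g zh - g ρ, zs - zh⟫ ≥ 0 := by
    have e1 : ⟪F zh + α • (g zh - g ρ), zs - zh⟫
        = ⟪F zh, zs - zh⟫ + α * ⟪g zh - g ρ, zs - zh⟫ := by
      rw [inner_add_left, real_inner_smul_left]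
    have e2 : ⟪F zh - F zs, zh - zs⟫
        = -⟪F zh, zs - zh⟫ - ⟪F zs, zh - zs⟫ := by
      rw [inner_sub_left]
      have : zh - zs = -(zs - zh) := by abel
      rw [this, inner_neg_right, inner_neg_right]
    nlinarith [h1, h2, h3, e1.symm, e2.symm]
  have expand : breg ψ g zs ρ - breg ψ g zs zh - breg ψ g zh ρ
      = ⟪g zh - g ρ, zs - zh⟫ := by
    simp only [breg, inner_sub_left]
    have a1 : ⟪g ρ, zs - ρ⟫ = ⟪g ρ, zs - zh⟫ + ⟪g ρ, zh - ρ⟫ := by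
      rw [← inner_add_right]; congr 1; abel
    linarith [a1]
  linarith [key, expand]
end

section
/- Let F be a monotone operator on a closed convex set Z, ψ μ-strongly convex and differentiable, α > 0. For references ρ₁, ρ₂ in int dom ψ ∩ Z, let z₁ and z₂ denote solutions of VI(Z, G_{ρ₁}) and VI(Z, G_{ρ₂}) respectively, where G_ρ(z) = F(z) + α(∇ψ(z) − ∇ψ(ρ)). Then ‖z₁ − z₂‖ ≤ (1/μ)‖∇ψ(ρ₁) − ∇ψ(ρ₂)‖. -/
open scoped RealInnerProductSpace

/-- Stability of regularized VI solutions with respect to the reference point: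
`‖z₁ - z₂‖ ≤ (1/μ) ‖∇ψ(ρ₁) - ∇ψ(ρ₂)‖`. -/
theorem regularized_solution_stability {E : Type*} [NormedAddCommGroup E]
    [InnerProductSpace ℝ E]
    (Z : Set E) (hZc : IsClosed Z) (hZ : Convex ℝ Z) (F : E → E)
    (hF : ∀ u ∈ Z, ∀ v ∈ Z, ⟪F u - F v, u - v⟫ ≥ 0)
    (ψ : E → ℝ) (g : E → E) (D : Set E) (μ : ℝ) (hμ : 0 < μ)
    (hsc : ∀ x y : E, ψ y ≥ ψ x + ⟪g x, y - x⟫ + μ / 2 * ‖y - x‖ ^ 2)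
    (α : ℝ) (hα : 0 < α)
    (ρ₁ ρ₂ : E) (hρ₁ : ρ₁ ∈ interior D ∩ Z) (hρ₂ : ρ₂ ∈ interior D ∩ Z)
    (z₁ z₂ : E) (hz₁ : z₁ ∈ Z) (hz₂ : z₂ ∈ Z)
    (hVI₁ : ∀ z ∈ Z, ⟪F z₁ + α • (g z₁ - g ρ₁), z - z₁⟫ ≥ 0)
    (hVI₂ : ∀ z ∈ Z, ⟪F z₂ + α • (g z₂ - g ρ₂), z - z₂⟫ ≥ 0) :
    ‖z₁ - z₂‖ ≤ (1 / μ) * ‖g ρ₁ - g ρ₂‖ := by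
  have h1 := hVI₁ z₂ hz₂
  have h2 := hVI₂ z₁ hz₁
  have hmono := hF z₁ hz₁ z₂ hz₂
  have hsc1 := hsc z₁ z₂
  have hsc2 := hsc z₂ z₁
  have hkey : μ * ‖z₁ - z₂‖ ^ 2 ≤ ⟪g ρ₁ - g ρ₂, z₁ - z₂⟫ := by
    have hn : ‖z₂ - z₁‖ = ‖z₁ - z₂‖ := by rw [norm_sub_rev]
    simp only [inner_add_left, inner_sub_left, inner_sub_right, real_inner_smul_left] at *
    rw [hn] at hsc1
    nlinarith [sq_nonneg (‖z₁ - z₂‖)]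
  have hc : ⟪g ρ₁ - g ρ₂, z₁ - z₂⟫ ≤ ‖g ρ₁ - g ρ₂‖ * ‖z₁ - z₂‖ := real_inner_le_norm _ _
  rcases eq_or_lt_of_le (norm_nonneg (z₁ - z₂)) with h0 | h0
  · rw [← h0]
    positivity
  · have h : μ * ‖z₁ - z₂‖ ≤ ‖g ρ₁ - g ρ₂‖ := by nlinarith
    rw [div_mul_eq_mul_div, le_div_iff₀ hμ, one_mul, mul_comm]
    exact h
end

section
/- If ψ is μ-strongly convex with continuously differentiable gradient ∇ψ on int dom ψ, and F is a monotone operator on a closed convex set Z, then the regularized VI solution map M, which sends ρ ∈ int dom ψ ∩ Z to the unique solution of VI(Z, G_ρ) with G_ρ(z) = F(z) + α(∇ψ(z) − ∇ψ(ρ)) for fixed α > 0, is continuous on int dom ψ ∩ Z. -/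
open scoped RealInnerProductSpace

/-- Continuity of the regularized VI solution map `M` on `int dom ψ ∩ Z`. -/
theorem regularized_solution_map_continuous {E : Type*} [NormedAddCommGroup E]
    [InnerProductSpace ℝ E]
    (Z : Set E) (hZc : IsClosed Z) (hZ : Convex ℝ Z) (F : E → E)
    (hF : ∀ u ∈ Z, ∀ v ∈ Z, ⟪F u - F v, u - v⟫ ≥ 0)
    (ψ : E → ℝ) (g : E → E) (D : Set E) (μ : ℝ) (hμ : 0 < μ)
    (hsc : ∀ x y : E, ψ y ≥ ψ x + ⟪g x, y - x⟫ + μ / 2 * ‖y - x‖ ^ 2)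
    (hgcont : ContinuousOn g (interior D))
    (α : ℝ) (hα : 0 < α)
    (M : E → E)
    (hM : ∀ ρ ∈ interior D ∩ Z, M ρ ∈ interior D ∩ Z ∧
      ∀ z ∈ Z, ⟪F (M ρ) + α • (g (M ρ) - g ρ), z - M ρ⟫ ≥ 0) :
    ContinuousOn M (interior D ∩ Z) := by
  set S := interior D ∩ Z with hS
  have key : ∀ ρ₁ ∈ S, ∀ ρ₂ ∈ S, ‖M ρ₁ - M ρ₂‖ ≤ (1 / μ) * ‖g ρ₁ - g ρ₂‖ := by
    intro ρ₁ hρ₁ ρ₂ hρ₂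
    obtain ⟨hu, h1⟩ := hM ρ₁ hρ₁
    obtain ⟨hv, h2⟩ := hM ρ₂ hρ₂
    set u := M ρ₁
    set v := M ρ₂
    have h1' := h1 v hv.2
    have h2' := h2 u hu.2
    have hmono := hF u hu.2 v hv.2
    have hs1 := hsc u v
    have hs2 := hsc v u
    -- strong monotonicity of g
    have hstr : ⟪g u - g v, u - v⟫ ≥ μ * ‖u - v‖ ^ 2 := by
      have hnn : ‖v - u‖ = ‖u - v‖ := by rw [norm_sub_rev]
      rw [hnn] at hs1
      simp only [inner_sub_left, inner_sub_right] at hs1 hs2 ⊢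
      linarith
    -- combine VIs
    have hcomb : ⟪g u - g v, u - v⟫ ≤ ⟪g ρ₁ - g ρ₂, u - v⟫ := by
      simp only [inner_add_left, inner_sub_left, inner_sub_right,
        real_inner_smul_left] at h1' h2' hmono ⊢
      nlinarith [h1', h2', hmono, hα]
    have hcs : ⟪g ρ₁ - g ρ₂, u - v⟫ ≤ ‖g ρ₁ - g ρ₂‖ * ‖u - v‖ :=
      real_inner_le_norm _ _
    have hchain : μ * ‖u - v‖ ^ 2 ≤ ‖g ρ₁ - g ρ₂‖ * ‖u - v‖ := by linarith
    have hn := norm_nonneg (u - v)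
    have hgn := norm_nonneg (g ρ₁ - g ρ₂)
    have hmu : μ * ‖u - v‖ ≤ ‖g ρ₁ - g ρ₂‖ := by
      rcases eq_or_lt_of_le hn with h0 | h0
      · rw [← h0, mul_zero]; exact hgn
      · nlinarith
    calc ‖u - v‖ ≤ ‖g ρ₁ - g ρ₂‖ / μ := (le_div_iff₀ hμ).2 (by linarith)
      _ = 1 / μ * ‖g ρ₁ - g ρ₂‖ := by ring
  intro ρ₀ hρ₀
  have hg : ContinuousWithinAt g S ρ₀ :=
    (hgcont ρ₀ hρ₀.1).mono Set.inter_subset_left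
  have hdist : Filter.Tendsto (fun ρ => dist (g ρ) (g ρ₀)) (nhdsWithin ρ₀ S) (nhds 0) := by
    have := hg.dist (continuousWithinAt_const : ContinuousWithinAt (fun _ => g ρ₀) S ρ₀)
    simpa [ContinuousWithinAt] using this
  have hbound : Filter.Tendsto (fun ρ => (1 / μ) * dist (g ρ) (g ρ₀)) (nhdsWithin ρ₀ S)
      (nhds 0) := by
    simpa using hdist.const_mul (1 / μ)
  have htend : Filter.Tendsto (fun ρ => dist (M ρ) (M ρ₀)) (nhdsWithin ρ₀ S) (nhds 0) := by
    apply squeeze_zero' (Filter.Eventually.of_forall fun x => dist_nonneg) _ hbound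
    filter_upwards [self_mem_nhdsWithin] with x hx
    rw [dist_eq_norm, dist_eq_norm]
    exact key x hx ρ₀ hρ₀
  exact (tendsto_iff_dist_tendsto_zero).2 htend
end

section
/- Under the iterative refinement procedure z_{t+1} = M(z_t), where M(ρ) is the unique solution of the regularized VI VI(Z, G_ρ) with G_ρ(z) = F(z) + α(∇ψ(z) − ∇ψ(ρ)), F monotone and ψ strongly convex differentiable: for any solution z* of VI(Z, F) and any t with z_{t+1} ≠ z_t, the strict inequality B_ψ(z*; z_t) > B_ψ(z*; z_{t+1}) holds. -/
open scoped RealInnerProductSpace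

/-- Strict monotone improvement of the iterative refinement `z_{t+1} = M(z_t)`:
if `z_{t+1} ≠ z_t`, then `B_ψ(z*; z_t) > B_ψ(z*; z_{t+1})`. -/
theorem iterative_refinement_strict_decrease {E : Type*} [NormedAddCommGroup E]
    [InnerProductSpace ℝ E]
    (Z : Set E) (hZc : IsClosed Z) (hZ : Convex ℝ Z) (F : E → E)
    (hF : ∀ u ∈ Z, ∀ v ∈ Z, ⟪F u - F v, u - v⟫ ≥ 0)
    (ψ : E → ℝ) (g : E → E) (D : Set E) (μ : ℝ) (hμ : 0 < μ)
    (hsc : ∀ x y : E, ψ y ≥ ψ x + ⟪g x, y - x⟫ + μ / 2 * ‖y - x‖ ^ 2)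
    (α : ℝ) (hα : 0 < α)
    (M : E → E)
    (hM : ∀ ρ ∈ interior D ∩ Z, M ρ ∈ interior D ∩ Z ∧
      ∀ z ∈ Z, ⟪F (M ρ) + α • (g (M ρ) - g ρ), z - M ρ⟫ ≥ 0)
    (zseq : ℕ → E) (hz0 : zseq 0 ∈ interior D ∩ Z)
    (hiter : ∀ t, zseq (t + 1) = M (zseq t))
    (hmem : ∀ t, zseq t ∈ interior D ∩ Z)
    (zs : E) (hzs : zs ∈ Z) (hVI : ∀ z ∈ Z, ⟪F zs, z - zs⟫ ≥ 0)
    (t : ℕ) (hne : zseq (t + 1) ≠ zseq t) :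
    breg ψ g zs (zseq t) > breg ψ g zs (zseq (t + 1)) := by
  obtain ⟨hmZ, hopt⟩ := hM (zseq t) (hmem t)
  have hiter' := hiter t
  set ρ := zseq t with hρ
  set m := M ρ with hmdef
  rw [hiter'] at hne ⊢
  have h1 : ⟪F m + α • (g m - g ρ), zs - m⟫ ≥ 0 := hopt zs hzs
  have h2 : ⟪F zs, m - zs⟫ ≥ 0 := hVI m hmZ.2
  have h3 : ⟪F m - F zs, m - zs⟫ ≥ 0 := hF m hmZ.2 zs hzs
  rw [inner_add_left, real_inner_smul_left] at h1
  rw [inner_sub_left] at h3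
  have hswap : ⟪F m, zs - m⟫ = -⟪F m, m - zs⟫ := by
    rw [← inner_neg_right, neg_sub]
  have hswap2 : ⟪g m - g ρ, zs - m⟫ = -⟪g m - g ρ, m - zs⟫ := by
    rw [← inner_neg_right, neg_sub]
  have h4 : ⟪g m - g ρ, zs - m⟫ ≥ 0 := by nlinarith
  have hstrong := hsc ρ m
  have hnorm : 0 < ‖m - ρ‖ ^ 2 := by
    have : 0 < ‖m - ρ‖ := norm_sub_pos_iff.mpr hne
    positivity
  have hexp : ⟪g m - g ρ, zs - m⟫ = ⟪g m, zs - m⟫ - ⟪g ρ, zs - m⟫ := by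
    rw [inner_sub_left]
  have hsplit : ⟪g ρ, zs - ρ⟫ = ⟪g ρ, zs - m⟫ + ⟪g ρ, m - ρ⟫ := by
    rw [← inner_add_right, sub_add_sub_cancel]
  simp only [breg]
  nlinarith [mul_pos hμ hnorm]
end

section
/- Let F be monotone on a closed convex set Z and α > 0, ψ strongly convex differentiable. If ẑ ∈ int dom ψ ∩ Z solves VI(Z, G_ρ) with G_ρ(z) = F(z) + α(∇ψ(z) − ∇ψ(ρ)), and z* ∈ Z solves VI(Z, F), then ⟨∇ψ(ẑ) − ∇ψ(ρ), z* − ẑ⟩ ≥ 0. -/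
open scoped RealInnerProductSpace

/-- Key inequality: `⟨∇ψ(ẑ) - ∇ψ(ρ), z* - ẑ⟩ ≥ 0` for a Nash equilibrium `z*` and the
solution `ẑ` of the regularized VI with reference `ρ`. -/
theorem regularized_gradient_inequality {E : Type*} [NormedAddCommGroup E]
    [InnerProductSpace ℝ E]
    (Z : Set E) (hZc : IsClosed Z) (hZ : Convex ℝ Z) (F : E → E)
    (hF : ∀ u ∈ Z, ∀ v ∈ Z, ⟪F u - F v, u - v⟫ ≥ 0)
    (ψ : E → ℝ) (g : E → E) (D : Set E) (μ : ℝ) (hμ : 0 < μ)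
    (hsc : ∀ x y : E, ψ y ≥ ψ x + ⟪g x, y - x⟫ + μ / 2 * ‖y - x‖ ^ 2)
    (α : ℝ) (hα : 0 < α) (ρ : E)
    (zh : E) (hzh : zh ∈ interior D ∩ Z)
    (hVIr : ∀ z ∈ Z, ⟪F zh + α • (g zh - g ρ), z - zh⟫ ≥ 0)
    (zs : E) (hzs : zs ∈ Z) (hVI : ∀ z ∈ Z, ⟪F zs, z - zs⟫ ≥ 0) :
    ⟪g zh - g ρ, zs - zh⟫ ≥ 0 := by
  have h1 := hVIr zs hzs
  have h2 := hVI zh hzh.2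
  have h3 := hF zh hzh.2 zs hzs
  rw [inner_add_left, real_inner_smul_left] at h1
  rw [inner_sub_left] at h3
  have hmono : ⟪F zh, zs - zh⟫ ≤ 0 := by
    have : ⟪F zs, zh - zs⟫ = - ⟪F zs, zs - zh⟫ := by
      rw [← inner_neg_right, neg_sub]
    have h3' : ⟪F zh, zh - zs⟫ ≥ ⟪F zs, zh - zs⟫ := by linarith
    have e1 : ⟪F zh, zh - zs⟫ = - ⟪F zh, zs - zh⟫ := by
      rw [← inner_neg_right, neg_sub]
    have e2 : ⟪F zs, zh - zs⟫ = - ⟪F zs, zs - zh⟫ := by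
      rw [← inner_neg_right, neg_sub]
    linarith [hVI zh hzh.2, e1, e2]
  nlinarith [h1, hmono, hα]
end
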